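/- Let h(x)=Σ_{i=1}^n h_u(x_i). Then 0 ≤ h(x) − ‖x‖_p^p ≤ n u^q for every x∈ℝⁿ, where ‖x‖_p^p = Σ_i |x_i|^p. -/

import Mathlib

/-- h_u(t) = inf_{0<s≤u} p(|t|s - s^q/q). -/
noncomputable def hApprox (p q u t : ℝ) : ℝ :=
  sInf ((fun s : ℝ => p * (|t| * s - s ^ q / q)) '' Set.Ioc 0 u)

section Aux

variable {p q u : ℝ}

lemma aux_q_neg (hp : 0 < p) (hp1 : p < 1) (hq : 1 / p + 1 / q = 1) : q < 0 := by
  have h1 : 1 < 1 / p := one_lt_one_div hp hp1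
  have : 1 / q < 0 := by linarith
  exact lt_of_not_ge fun h => absurd (one_div_nonneg.2 h) (not_le.2 this)

lemma aux_pq (hp : 0 < p) (hp1 : p < 1) (hq : 1 / p + 1 / q = 1) : p + q = p * q := by
  have hq0 : q ≠ 0 := (aux_q_neg hp hp1 hq).ne
  field_simp at hq
  linarith

/-- Reverse Young: t^p ≤ p (t s - s^q / q) for t ≥ 0, s > 0. -/
lemma aux_key (hp : 0 < p) (hp1 : p < 1) (hq : 1 / p + 1 / q = 1)
    {t s : ℝ} (ht : 0 ≤ t) (hs : 0 < s) :
    t ^ p ≤ p * (t * s - s ^ q / q) := by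
  have hq0 : q ≠ 0 := (aux_q_neg hp hp1 hq).ne
  have hpq : p + q = p * q := aux_pq hp hp1 hq
  have hP : (1 / p).HolderConjugate (1 / (1 - p)) := by
    rw [Real.holderConjugate_iff]
    constructor
    · exact one_lt_one_div hp hp1
    · rw [one_div, one_div, inv_inv, inv_inv]; ring
  have hts : 0 ≤ t * s := mul_nonneg ht hs.le
  have h := Real.young_inequality_of_nonneg
    (Real.rpow_nonneg hts p) (Real.rpow_nonneg hs.le (q * (1 - p))) hP
  have e1 : ((t * s) ^ p) ^ (1 / p) = t * s := by
    rw [← Real.rpow_mul hts, one_div, mul_inv_cancel₀ hp.ne', Real.rpow_one]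
  have h1p : (1 : ℝ) - p ≠ 0 := sub_ne_zero.2 (by linarith)
  have e2 : (s ^ (q * (1 - p))) ^ (1 / (1 - p)) = s ^ q := by
    rw [← Real.rpow_mul hs.le, mul_one_div, mul_div_assoc, div_self h1p, mul_one]
  have e3 : (t * s) ^ p * s ^ (q * (1 - p)) = t ^ p := by
    rw [Real.mul_rpow ht hs.le, mul_assoc, ← Real.rpow_add hs]
    have : p + q * (1 - p) = 0 := by ring_nf; linarith
    rw [this, Real.rpow_zero, mul_one]
  rw [e1, e2, e3] at h
  have e4 : t * s / (1 / p) + s ^ q / (1 / (1 - p)) = p * (t * s - s ^ q / q) := by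
    have hpq' : p / q = p - 1 := by
      field_simp
      linarith
    rw [one_div, one_div, div_eq_mul_inv, div_eq_mul_inv, inv_inv, inv_inv]
    have : p * (t * s - s ^ q / q) = p * (t * s) - p / q * s ^ q := by ring
    rw [this, hpq']
    ring
  calc t ^ p ≤ t * s / (1 / p) + s ^ q / (1 / (1 - p)) := h
    _ = p * (t * s - s ^ q / q) := e4

lemma aux_lb (hp : 0 < p) (hp1 : p < 1) (hq : 1 / p + 1 / q = 1) (hu : 0 < u) (t : ℝ) :
    |t| ^ p ≤ hApprox p q u t := by
  refine le_csInf ⟨p * (|t| * u - u ^ q / q), ⟨u, ⟨hu, le_refl u⟩, rfl⟩⟩ ?_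
  rintro b ⟨s, ⟨hs0, _⟩, rfl⟩
  exact aux_key hp hp1 hq (abs_nonneg t) hs0

lemma aux_bdd (hp : 0 < p) (hp1 : p < 1) (hq : 1 / p + 1 / q = 1) (t : ℝ) :
    BddBelow ((fun s : ℝ => p * (|t| * s - s ^ q / q)) '' Set.Ioc 0 u) := by
  refine ⟨|t| ^ p, ?_⟩
  rintro b ⟨s, ⟨hs0, _⟩, rfl⟩
  exact aux_key hp hp1 hq (abs_nonneg t) hs0

lemma aux_ub (hp : 0 < p) (hp1 : p < 1) (hq : 1 / p + 1 / q = 1) (hu : 0 < u) (t : ℝ) :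
    hApprox p q u t ≤ |t| ^ p + u ^ q := by
  have hqneg := aux_q_neg hp hp1 hq
  have hq0 : q ≠ 0 := hqneg.ne
  have hpq : p + q = p * q := aux_pq hp hp1 hq
  have huq : 0 < u ^ q := Real.rpow_pos_of_pos hu q
  by_cases hcase : u ^ (q - 1) ≤ |t|
  · -- minimizer s* = |t|^(1/(q-1)) lies in (0, u]; value is |t|^p
    have ht0 : 0 < |t| := lt_of_lt_of_le (Real.rpow_pos_of_pos hu _) hcase
    set s : ℝ := |t| ^ (1 / (q - 1)) with hsdef
    have hq1 : q - 1 < 0 := by linarith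
    have hs0 : 0 < s := Real.rpow_pos_of_pos ht0 _
    have hsu : s ≤ u := by
      have : |t| ^ (1 / (q - 1)) ≤ (u ^ (q - 1)) ^ (1 / (q - 1)) := by
        apply Real.rpow_le_rpow_of_nonpos (Real.rpow_pos_of_pos hu _) hcase
        exact le_of_lt (one_div_neg.2 hq1)
      rw [← Real.rpow_mul hu.le, one_div, mul_inv_cancel₀ hq1.ne, Real.rpow_one] at this
      simpa [hsdef, one_div] using this
    have hts : |t| * s = |t| ^ (q / (q - 1)) := by
      nth_rewrite 1 [← Real.rpow_one |t|]
      rw [hsdef, ← Real.rpow_add ht0]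
      congr 1
      field_simp [hq1.ne]
      ring
    have hsq : s ^ q = |t| ^ (q / (q - 1)) := by
      rw [hsdef, ← Real.rpow_mul ht0.le, one_div, inv_mul_eq_div]
    have hexp : q / (q - 1) = p := by
      rw [div_eq_iff hq1.ne]
      nlinarith
    have hval : p * (|t| * s - s ^ q / q) = |t| ^ p := by
      rw [hts, hsq, hexp]
      have : p * (|t| ^ p - |t| ^ p / q) = |t| ^ p * (p * (1 - 1 / q)) := by ring
      rw [this]
      have : p * (1 - 1 / q) = 1 := by
        field_simp
        linarith
      rw [this, mul_one]
    calc hApprox p q u t ≤ p * (|t| * s - s ^ q / q) :=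
          csInf_le (aux_bdd hp hp1 hq t) ⟨s, ⟨hs0, hsu⟩, rfl⟩
      _ = |t| ^ p := hval
      _ ≤ |t| ^ p + u ^ q := by linarith
  · push_neg at hcase
    have h1 : hApprox p q u t ≤ p * (|t| * u - u ^ q / q) :=
      csInf_le (aux_bdd hp hp1 hq t) ⟨u, ⟨hu, le_refl u⟩, rfl⟩
    have h2 : |t| * u ≤ u ^ q := by
      have : |t| * u ≤ u ^ (q - 1) * u := by
        apply mul_le_mul_of_nonneg_right hcase.le hu.le
      calc |t| * u ≤ u ^ (q - 1) * u := this
        _ = u ^ q := by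
          nth_rewrite 2 [← Real.rpow_one u]
          rw [← Real.rpow_add hu]; ring_nf
    have h3 : p * (|t| * u - u ^ q / q) ≤ u ^ q := by
      have hpq' : -(p / q) = 1 - p := by
        field_simp
        linarith
      have : p * (|t| * u - u ^ q / q) = p * (|t| * u) + (-(p/q)) * u ^ q := by ring
      rw [this, hpq']
      nlinarith
    have ht0 : 0 ≤ |t| ^ p := Real.rpow_nonneg (abs_nonneg t) p
    linarith

end Aux

/-- For h(x) = Σ_i h_u(x_i), one has 0 ≤ h(x) - ‖x‖_p^p ≤ n u^q. -/
theorem stmt_5 (n : ℕ) (p q u : ℝ) (hp : 0 < p) (hp1 : p < 1) (hq : 1 / p + 1 / q = 1)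
    (hu : 0 < u) (x : Fin n → ℝ) :
    0 ≤ (∑ i, hApprox p q u (x i)) - ∑ i, |x i| ^ p ∧
      (∑ i, hApprox p q u (x i)) - ∑ i, |x i| ^ p ≤ n * u ^ q := by
  constructor
  · rw [sub_nonneg]
    exact Finset.sum_le_sum fun i _ => aux_lb hp hp1 hq hu (x i)
  · rw [← Finset.sum_sub_distrib]
    calc (∑ i, (hApprox p q u (x i) - |x i| ^ p)) ≤ ∑ _i : Fin n, u ^ q :=
          Finset.sum_le_sum fun i _ => by linarith [aux_ub hp hp1 hq hu (x i)]
      _ = n * u ^ q := by simp [Finset.sum_const, nsmul_eq_mul]
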